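/- (Corollary 8, part 𝒲 ⊆ 𝒱*) Let 𝒞 be a nonempty compact set of cost matrices and let 𝒱* be the unique nonempty compact set with F_𝒞(𝒱*) = 𝒱*. Let {C^k}_{k ∈ ℕ} be any sequence with C^k ∈ 𝒞, let V⁰ ∈ ℝ^S, define V^{k+1} = f_{C^k}(V^k), and suppose the sequence V^k converges (in the sup norm) to some V ∈ ℝ^S. Then V ∈ 𝒱*. -/
import Mathlib

open Metric

/-- The Bellman operator for a discounted MDP with transition kernel `P`,
discount factor `γ` and cost matrix `C`. -/
noncomputable def bellman (S A : ℕ) (P : Fin S → Fin S → Fin A → ℝ) (γ : ℝ)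
    (C : Fin S → Fin A → ℝ) (V : Fin S → ℝ) : Fin S → ℝ :=
  fun s => ⨅ a : Fin A, (C s a + γ * ∑ s' : Fin S, P s' s a * V s')

/-- The set-based Bellman operator associated with a set `𝒞` of cost matrices. -/
noncomputable def setBellman (S A : ℕ) (P : Fin S → Fin S → Fin A → ℝ) (γ : ℝ)
    (𝒞 : Set (Fin S → Fin A → ℝ)) (𝒱 : Set (Fin S → ℝ)) : Set (Fin S → ℝ) :=
  closure (⋃ C ∈ 𝒞, ⋃ V ∈ 𝒱, {bellman S A P γ C V})

lemma bellman_contract (S A : ℕ) (hA : 0 < A)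
    (P : Fin S → Fin S → Fin A → ℝ)
    (hP0 : ∀ s' s a, 0 ≤ P s' s a)
    (hP1 : ∀ s a, ∑ s' : Fin S, P s' s a = 1)
    (γ : ℝ) (hγ0 : 0 < γ)
    (C : Fin S → Fin A → ℝ) (V W : Fin S → ℝ) :
    dist (bellman S A P γ C V) (bellman S A P γ C W) ≤ γ * dist V W := by
  have hne : Nonempty (Fin A) := ⟨⟨0, hA⟩⟩
  have hnonneg : 0 ≤ γ * dist V W := mul_nonneg hγ0.le dist_nonneg
  rw [dist_pi_le_iff hnonneg]
  intro s
  set x : Fin A → ℝ := fun a => C s a + γ * ∑ s' : Fin S, P s' s a * V s'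
  set y : Fin A → ℝ := fun a => C s a + γ * ∑ s' : Fin S, P s' s a * W s'
  have key : ∀ a, |x a - y a| ≤ γ * dist V W := by
    intro a
    have : x a - y a = γ * ∑ s' : Fin S, P s' s a * (V s' - W s') := by
      simp only [x, y, mul_sub, Finset.sum_sub_distrib]
      ring
    rw [this, abs_mul, abs_of_pos hγ0]
    have h1 : |∑ s' : Fin S, P s' s a * (V s' - W s')| ≤ dist V W := by
      calc |∑ s' : Fin S, P s' s a * (V s' - W s')|
          ≤ ∑ s' : Fin S, |P s' s a * (V s' - W s')| := Finset.abs_sum_le_sum_abs _ _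
        _ ≤ ∑ s' : Fin S, P s' s a * dist V W := by
            apply Finset.sum_le_sum; intro s' _
            rw [abs_mul, abs_of_nonneg (hP0 s' s a)]
            exact mul_le_mul_of_nonneg_left
              ((Real.dist_eq _ _ ▸ (dist_le_pi_dist V W s'))) (hP0 s' s a)
        _ = dist V W := by rw [← Finset.sum_mul, hP1, one_mul]
    exact mul_le_mul_of_nonneg_left h1 hγ0.le
  have bddx : BddBelow (Set.range x) := Set.Finite.bddBelow (Set.finite_range x)
  have bddy : BddBelow (Set.range y) := Set.Finite.bddBelow (Set.finite_range y)
  have h1 : (⨅ a, x a) ≤ (⨅ a, y a) + γ * dist V W := by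
    rw [← sub_le_iff_le_add]
    apply le_ciInf; intro a
    have := abs_le.mp (key a)
    linarith [ciInf_le bddx a]
  have h2 : (⨅ a, y a) ≤ (⨅ a, x a) + γ * dist V W := by
    rw [← sub_le_iff_le_add]
    apply le_ciInf; intro a
    have := abs_le.mp (key a)
    linarith [ciInf_le bddy a]
  show dist (⨅ a, x a) (⨅ a, y a) ≤ γ * dist V W
  rw [Real.dist_eq, abs_le]
  constructor <;> linarith

theorem limit_point_mem_fixed_point_set (S A : ℕ) (hS : 0 < S) (hA : 0 < A)
    (P : Fin S → Fin S → Fin A → ℝ)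
    (hP0 : ∀ s' s a, 0 ≤ P s' s a)
    (hP1 : ∀ s a, ∑ s' : Fin S, P s' s a = 1)
    (γ : ℝ) (hγ : γ ∈ Set.Ioo (0 : ℝ) 1)
    (𝒞 : Set (Fin S → Fin A → ℝ)) (h𝒞ne : 𝒞.Nonempty) (h𝒞c : IsCompact 𝒞)
    (Vstar : Set (Fin S → ℝ)) (hVne : Vstar.Nonempty) (hVc : IsCompact Vstar)
    (hVfix : setBellman S A P γ 𝒞 Vstar = Vstar)
    (Cseq : ℕ → (Fin S → Fin A → ℝ)) (hCseq : ∀ k, Cseq k ∈ 𝒞)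
    (V : ℕ → (Fin S → ℝ))
    (hV : ∀ k, V (k + 1) = bellman S A P γ (Cseq k) (V k))
    (Vlim : Fin S → ℝ)
    (hlim : Filter.Tendsto V Filter.atTop (nhds Vlim)) :
    Vlim ∈ Vstar := by
  obtain ⟨hγ0, hγ1⟩ := hγ
  -- Vstar is stable under f_C for C ∈ 𝒞
  have hstable : ∀ k (W : Fin S → ℝ), W ∈ Vstar → bellman S A P γ (Cseq k) W ∈ Vstar := by
    intro k W hW
    rw [← hVfix]
    apply subset_closure
    exact Set.mem_biUnion (hCseq k) (Set.mem_biUnion hW rfl)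
  set d : ℕ → ℝ := fun k => infDist (V k) Vstar with hd
  have hstep : ∀ k, d (k + 1) ≤ γ * d k := by
    intro k
    have h1 : ∀ W ∈ Vstar, d (k + 1) ≤ γ * dist (V k) W := by
      intro W hW
      calc d (k + 1) ≤ dist (V (k + 1)) (bellman S A P γ (Cseq k) W) :=
            infDist_le_dist_of_mem (hstable k W hW)
        _ ≤ γ * dist (V k) W := by
            rw [hV k]; exact bellman_contract S A hA P hP0 hP1 γ hγ0 _ _ _
    by_contra hcon
    push_neg at hcon
    have hlt : d k < d (k + 1) / γ := by
      rw [lt_div_iff₀ hγ0]; linarith [mul_comm (d k) γ]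
    obtain ⟨W, hW, hWd⟩ := (infDist_lt_iff hVne).mp hlt
    have := h1 W hW
    rw [lt_div_iff₀ hγ0] at hWd
    nlinarith
  have hgeo : ∀ k, d k ≤ γ ^ k * d 0 := by
    intro k
    induction k with
    | zero => simp
    | succ n ih =>
      calc d (n + 1) ≤ γ * d n := hstep n
        _ ≤ γ * (γ ^ n * d 0) := by
            exact mul_le_mul_of_nonneg_left ih hγ0.le
        _ = γ ^ (n + 1) * d 0 := by ring
  have hd0 : ∀ k, 0 ≤ d k := fun k => infDist_nonneg
  have htend0 : Filter.Tendsto d Filter.atTop (nhds 0) := by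
    have hg : Filter.Tendsto (fun k => γ ^ k * d 0) Filter.atTop (nhds 0) := by
      have := tendsto_pow_atTop_nhds_zero_of_lt_one hγ0.le hγ1
      simpa using this.mul_const (d 0)
    exact squeeze_zero hd0 hgeo hg
  have hcont : Filter.Tendsto d Filter.atTop (nhds (infDist Vlim Vstar)) := by
    exact ((continuous_infDist_pt Vstar).continuousAt.tendsto.comp hlim)
  have hzero : infDist Vlim Vstar = 0 := tendsto_nhds_unique hcont htend0
  exact (hVc.isClosed.mem_iff_infDist_zero hVne).mpr hzero
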